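/- Let Γ be a balanced connected signed graph on n vertices with incidence matrix N and Laplacian L = N Nᵀ. Then det(L) = 0 and the sum of squares of all (n−1)×(n−1) minors of N equals n·τ(Γ), where τ(Γ) is the number of spanning trees of the underlying graph. -/

import Mathlib

open Matrix BigOperators

/-- A signed graph together with an enumeration of its edges. -/
structure SignedIncidence (n m : ℕ) where
  G : SimpleGraph (Fin n)
  sigma : Fin n → Fin n → ℤ
  sigma_symm : ∀ i j, sigma i j = sigma j i
  sigma_sign : ∀ i j, G.Adj i j → sigma i j = 1 ∨ sigma i j = -1
  ends : Fin m → Fin n × Fin n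
  ends_adj : ∀ ℓ, G.Adj (ends ℓ).1 (ends ℓ).2
  ends_inj : Function.Injective fun ℓ => Sym2.mk.uncurry (ends ℓ)
  ends_surj : ∀ e ∈ G.edgeSet, ∃ ℓ, Sym2.mk.uncurry (ends ℓ) = e

namespace SignedIncidence

variable {n m : ℕ}

def edge (S : SignedIncidence n m) (ℓ : Fin m) : Sym2 (Fin n) := Sym2.mk.uncurry (S.ends ℓ)

/-- `N` is an incidence matrix of the signed graph `S`. -/
def IsIncidence (S : SignedIncidence n m) (N : Matrix (Fin n) (Fin m) ℝ) : Prop :=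
  ∀ ℓ : Fin m,
    N (S.ends ℓ).1 ℓ * N (S.ends ℓ).2 ℓ = -((S.sigma (S.ends ℓ).1 (S.ends ℓ).2 : ℤ) : ℝ) ∧
    (N (S.ends ℓ).1 ℓ = 1 ∨ N (S.ends ℓ).1 ℓ = -1) ∧
    (N (S.ends ℓ).2 ℓ = 1 ∨ N (S.ends ℓ).2 ℓ = -1) ∧
    ∀ k, k ≠ (S.ends ℓ).1 → k ≠ (S.ends ℓ).2 → N k ℓ = 0

/-- The sign of a walk (in the graph or any subgraph): product of edge signs. -/
def walkSign (S : SignedIncidence n m) {G' : SimpleGraph (Fin n)} {i j : Fin n}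
    (w : G'.Walk i j) : ℤ :=
  (w.darts.map fun d => S.sigma d.toProd.1 d.toProd.2).prod

/-- A signed graph is balanced if every closed walk has sign `+1`. -/
def Balanced (S : SignedIncidence n m) : Prop :=
  ∀ (i : Fin n) (w : S.G.Walk i i), S.walkSign w = 1

end SignedIncidence

/- ### Auxiliary machinery -/

section Aux

open SimpleGraph SignedIncidence

/-- Property of a real matrix: every column has at most two nonzero entries, which are `±1`,
and if there are two they sum to zero. -/
def ColProp {α β : Type*} (A : Matrix α β ℝ) : Prop :=
  ∀ q, (∀ p, A p q = 0) ∨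
    (∃ a, (A a q = 1 ∨ A a q = -1) ∧ ∀ p, p ≠ a → A p q = 0) ∨
    (∃ a b, a ≠ b ∧ A a q + A b q = 0 ∧ (A a q = 1 ∨ A a q = -1) ∧
      ∀ p, p ≠ a → p ≠ b → A p q = 0)

open scoped Classical in
lemma ColProp.submatrix {α β γ δ : Type*} {A : Matrix α β ℝ} (h : ColProp A)
    {u : γ → α} (hu : Function.Injective u) (g : δ → β) :
    ColProp (A.submatrix u g) := by
  intro q
  rcases h (g q) with h0 | ⟨a, ha, h0⟩ | ⟨a, b, hab, hsum, ha, h0⟩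
  · exact Or.inl fun p => h0 _
  · by_cases hmem : ∃ p, u p = a
    · obtain ⟨pa, rfl⟩ := hmem
      exact Or.inr (Or.inl ⟨pa, ha, fun p hp => h0 _ fun hc => hp (hu hc)⟩)
    · exact Or.inl fun p => h0 _ fun hc => hmem ⟨p, hc⟩
  · have hb : A b (g q) = 1 ∨ A b (g q) = -1 := by
      rcases ha with h1 | h1
      · right; linarith
      · left; linarith
    by_cases hma : ∃ p, u p = a <;> by_cases hmb : ∃ p, u p = b
    · obtain ⟨pa, rfl⟩ := hma; obtain ⟨pb, rfl⟩ := hmb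
      refine Or.inr (Or.inr ⟨pa, pb, fun hc => hab (by rw [hc]), hsum, ha, ?_⟩)
      intro p hpa hpb
      exact h0 _ (fun hc => hpa (hu hc)) fun hc => hpb (hu hc)
    · obtain ⟨pa, rfl⟩ := hma
      refine Or.inr (Or.inl ⟨pa, ha, ?_⟩)
      intro p hp
      exact h0 _ (fun hc => hp (hu hc)) fun hc => hmb ⟨p, hc⟩
    · obtain ⟨pb, rfl⟩ := hmb
      refine Or.inr (Or.inl ⟨pb, hb, ?_⟩)
      intro p hp
      exact h0 _ (fun hc => hma ⟨p, hc⟩) fun hc => hp (hu hc)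
    · exact Or.inl fun p => h0 _ (fun hc => hma ⟨p, hc⟩) fun hc => hmb ⟨p, hc⟩

/-- Total unimodularity for incidence-type matrices. -/
lemma colProp_det : ∀ (r : ℕ) (A : Matrix (Fin r) (Fin r) ℝ), ColProp A →
    A.det = 0 ∨ A.det = 1 ∨ A.det = -1 := by
  intro r
  induction r with
  | zero => intro A _; right; left; exact Matrix.det_fin_zero
  | succ r ih =>
    intro A hA
    by_cases h0 : ∃ q, ∀ p, A p q = 0
    · obtain ⟨q, hq⟩ := h0
      exact Or.inl (Matrix.det_eq_zero_of_column_eq_zero q hq)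
    by_cases h1 : ∃ q a, (A a q = 1 ∨ A a q = -1) ∧ ∀ p, p ≠ a → A p q = 0
    · obtain ⟨q, a, hval, hz⟩ := h1
      have hdet : A.det
          = (-1) ^ ((a : ℕ) + (q : ℕ)) * A a q * (A.submatrix a.succAbove q.succAbove).det := by
        rw [Matrix.det_succ_column A q, Finset.sum_eq_single a]
        · intro b _ hb; rw [hz b hb]; ring
        · intro h; exact absurd (Finset.mem_univ a) h
      have hrec := ih (A.submatrix a.succAbove q.succAbove)
        (hA.submatrix Fin.succAbove_right_injective _)
      have hpow : (-1 : ℝ) ^ ((a : ℕ) + (q : ℕ)) = 1 ∨ (-1 : ℝ) ^ ((a : ℕ) + (q : ℕ)) = -1 := by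
        rcases Nat.even_or_odd ((a : ℕ) + (q : ℕ)) with he | ho
        · exact Or.inl he.neg_one_pow
        · exact Or.inr ho.neg_one_pow
      rw [hdet]
      rcases hval with h | h <;> rcases hrec with h2 | h2 | h2 <;> rcases hpow with h3 | h3 <;>
        rw [h, h2, h3] <;> norm_num
    · -- every column has two opposite entries: columns sum to zero
      have hsum : ∀ q, ∑ p, A p q = 0 := by
        intro q
        rcases hA q with hz | ⟨a, ha, hz⟩ | ⟨a, b, hab, hs, ha, hz⟩
        · exact absurd ⟨q, hz⟩ h0
        · exact absurd ⟨q, a, ha, hz⟩ h1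
        · rw [Finset.sum_eq_add a b hab (fun c _ hc => hz c hc.1 hc.2)
            (by simp) (by simp)]
          exact hs
      refine Or.inl (Matrix.exists_vecMul_eq_zero_iff.mp ⟨fun _ => (1 : ℝ), ?_, ?_⟩)
      · intro h
        have := congrFun h 0
        norm_num at this
      · funext q
        simpa [Matrix.vecMul, dotProduct] using hsum q

end Aux

namespace SignedIncidence

open SimpleGraph

variable {k m : ℕ}

/- ### walk signs and switching -/

lemma walkSign_nil (S : SignedIncidence n m) {G' : SimpleGraph (Fin n)} {i : Fin n} :
    S.walkSign (Walk.nil : G'.Walk i i) = 1 := rfl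

lemma walkSign_cons (S : SignedIncidence n m) {G' : SimpleGraph (Fin n)} {i j l : Fin n}
    (h : G'.Adj i j) (w : G'.Walk j l) :
    S.walkSign (Walk.cons h w) = S.sigma i j * S.walkSign w := by
  simp [walkSign]

lemma walkSign_append (S : SignedIncidence n m) {G' : SimpleGraph (Fin n)} {i j l : Fin n}
    (w : G'.Walk i j) (w' : G'.Walk j l) :
    S.walkSign (w.append w') = S.walkSign w * S.walkSign w' := by
  simp [walkSign, Walk.darts_append]

lemma walkSign_reverse (S : SignedIncidence n m) {G' : SimpleGraph (Fin n)} {i j : Fin n}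
    (w : G'.Walk i j) : S.walkSign w.reverse = S.walkSign w := by
  simp only [walkSign, Walk.darts_reverse, List.map_reverse, List.prod_reverse, List.map_map]
  congr 1
  apply List.map_congr_left
  intro d _
  exact S.sigma_symm _ _

lemma walkSign_pm {S : SignedIncidence n m} {i j : Fin n} (w : S.G.Walk i j) :
    S.walkSign w = 1 ∨ S.walkSign w = -1 := by
  induction w with
  | nil => exact Or.inl rfl
  | cons h w ih =>
    rw [walkSign_cons]
    rcases S.sigma_sign _ _ h with h1 | h1 <;> rcases ih with h2 | h2 <;>
      rw [h1, h2] <;> norm_num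

lemma walkSign_unique {S : SignedIncidence n m} (hbal : S.Balanced) {i j : Fin n}
    (w w' : S.G.Walk i j) : S.walkSign w = S.walkSign w' := by
  have h := hbal i (w.append w'.reverse)
  rw [walkSign_append, walkSign_reverse] at h
  rcases walkSign_pm w with h1 | h1 <;> rcases walkSign_pm w' with h2 | h2 <;>
    rw [h1, h2] at h ⊢ <;> omega

lemma exists_switch (S : SignedIncidence (k + 1) m) (hconn : S.G.Connected)
    (hbal : S.Balanced) :
    ∃ θ : Fin (k + 1) → ℤ, (∀ v, θ v = 1 ∨ θ v = -1) ∧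
      ∀ i j, S.G.Adj i j → S.sigma i j = θ i * θ j := by
  have hwalk : ∀ v : Fin (k + 1), S.G.Walk 0 v := fun v =>
    Classical.choice (hconn.preconnected 0 v)
  refine ⟨fun v => S.walkSign (hwalk v), fun v => walkSign_pm _, ?_⟩
  intro i j hadj
  have hkey : S.walkSign (hwalk j)
      = S.walkSign ((hwalk i).append (Walk.cons hadj Walk.nil)) :=
    walkSign_unique hbal _ _
  rw [walkSign_append, walkSign_cons, walkSign_nil, mul_one] at hkey
  show S.sigma i j = S.walkSign (hwalk i) * S.walkSign (hwalk j)
  rw [hkey]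
  rcases walkSign_pm (hwalk i) with h1 | h1 <;> rw [h1] <;> ring

/- ### standard (switched) incidence matrices -/

variable (S : SignedIncidence (k + 1) m)

/-- `M` is a standard incidence matrix: each column has a `+1` and a `-1` at the two
endpoints of the corresponding edge and zeros elsewhere. -/
def Std (M : Matrix (Fin (k + 1)) (Fin m) ℝ) : Prop :=
  ∀ ℓ, (M (S.ends ℓ).1 ℓ = 1 ∨ M (S.ends ℓ).1 ℓ = -1) ∧
    M (S.ends ℓ).1 ℓ + M (S.ends ℓ).2 ℓ = 0 ∧
    ∀ v, v ≠ (S.ends ℓ).1 → v ≠ (S.ends ℓ).2 → M v ℓ = 0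

variable {S}
variable {M : Matrix (Fin (k + 1)) (Fin m) ℝ}

lemma ends_ne (ℓ : Fin m) : (S.ends ℓ).1 ≠ (S.ends ℓ).2 := (S.ends_adj ℓ).ne

lemma Std.sum_mul (hM : S.Std M) (ℓ : Fin m) (x : Fin (k + 1) → ℝ) :
    ∑ v, x v * M v ℓ
      = x (S.ends ℓ).1 * M (S.ends ℓ).1 ℓ + x (S.ends ℓ).2 * M (S.ends ℓ).2 ℓ := by
  refine Finset.sum_eq_add _ _ (ends_ne ℓ) (fun c _ hc => ?_) (by simp) (by simp)
  rw [(hM ℓ).2.2 c hc.1 hc.2, mul_zero]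

lemma Std.sum_mul_eq_zero (hM : S.Std M) (ℓ : Fin m) {x : Fin (k + 1) → ℝ}
    (hx : x (S.ends ℓ).1 = x (S.ends ℓ).2) :
    ∑ v, x v * M v ℓ = 0 := by
  rw [hM.sum_mul ℓ x, hx]
  have h := (hM ℓ).2.1
  linear_combination x (S.ends ℓ).2 * h

lemma Std.colProp (hM : S.Std M) : ColProp M := by
  intro ℓ
  exact Or.inr (Or.inr ⟨(S.ends ℓ).1, (S.ends ℓ).2, ends_ne ℓ, (hM ℓ).2.1, (hM ℓ).1,
    fun v h1 h2 => (hM ℓ).2.2 v h1 h2⟩)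

/-- Column formula: for an edge `ℓ` written as `s(x,y)`, multiplying the column by the
entry at `x` gives the difference of indicators of `x` and `y`. -/
lemma Std.col_formula (hM : S.Std M) (ℓ : Fin m) {x y : Fin (k + 1)}
    (hxy : S.edge ℓ = s(x, y)) (p : Fin (k + 1)) :
    M x ℓ * M p ℓ = (if p = x then 1 else 0) - (if p = y then 1 else 0) := by
  obtain ⟨h1, h2, h3⟩ := hM ℓ
  have hne := ends_ne (S := S) ℓ
  have hb : M (S.ends ℓ).2 ℓ = - M (S.ends ℓ).1 ℓ := by linarith
  have hcase : ((S.ends ℓ).1 = x ∧ (S.ends ℓ).2 = y) ∨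
      ((S.ends ℓ).1 = y ∧ (S.ends ℓ).2 = x) := by
    have := hxy
    rw [SignedIncidence.edge] at this
    rw [show Sym2.mk.uncurry (S.ends ℓ) = s((S.ends ℓ).1, (S.ends ℓ).2) by rfl] at this
    exact Sym2.eq_iff.mp this
  rcases hcase with ⟨hA, hB⟩ | ⟨hA, hB⟩
  · subst hA; subst hB
    by_cases hpa : p = (S.ends ℓ).1
    · subst hpa
      simp only [if_pos rfl, if_neg hne]
      rcases h1 with h | h <;> rw [h] <;> norm_num
    · by_cases hpb : p = (S.ends ℓ).2
      · subst hpb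
        simp only [if_neg hpa, if_pos rfl]
        rw [hb]
        rcases h1 with h | h <;> rw [h] <;> norm_num
      · rw [h3 p hpa hpb, if_neg hpa, if_neg hpb]; ring
  · subst hA; subst hB
    have hb1 : M (S.ends ℓ).2 ℓ = 1 ∨ M (S.ends ℓ).2 ℓ = -1 := by
      rcases h1 with h | h
      · right; rw [hb, h]
      · left; rw [hb, h]; norm_num
    by_cases hpa : p = (S.ends ℓ).2
    · subst hpa
      simp only [if_pos rfl, if_neg (Ne.symm hne)]
      rcases hb1 with h | h <;> rw [h] <;> norm_num
    · by_cases hpb : p = (S.ends ℓ).1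
      · subst hpb
        simp only [if_neg hpa, if_pos rfl]
        have hmm : M (S.ends ℓ).1 ℓ = - M (S.ends ℓ).2 ℓ := by linarith
        rw [hmm]
        rcases hb1 with h | h <;> rw [h] <;> norm_num
      · rw [h3 p hpb hpa, if_neg hpa, if_neg hpb]; ring

/- ### the graph spanned by a choice of columns -/

variable (S) in
/-- The subgraph formed by the edges enumerated by `f`. -/
def Hgraph (f : Fin k → Fin m) : SimpleGraph (Fin (k + 1)) :=
  SimpleGraph.fromEdgeSet (Set.range fun j => S.edge (f j))

lemma edge_not_isDiag (ℓ : Fin m) : ¬ (S.edge ℓ).IsDiag := by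
  rw [SignedIncidence.edge, show Sym2.mk.uncurry (S.ends ℓ) = s((S.ends ℓ).1, (S.ends ℓ).2) from rfl,
    Sym2.mk_isDiag_iff]
  exact ends_ne ℓ

lemma Hgraph_edgeSet (f : Fin k → Fin m) :
    (Hgraph S f).edgeSet = Set.range fun j => S.edge (f j) := by
  rw [Hgraph, SimpleGraph.edgeSet_fromEdgeSet]
  ext e
  simp only [Set.mem_diff, Set.mem_setOf_eq, Set.mem_range, and_iff_left_iff_imp]
  rintro ⟨j, rfl⟩
  exact edge_not_isDiag _

lemma Hgraph_adj {f : Fin k → Fin m} {x y : Fin (k + 1)} :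
    (Hgraph S f).Adj x y ↔ (∃ j, S.edge (f j) = s(x, y)) ∧ x ≠ y := by
  rw [Hgraph, SimpleGraph.fromEdgeSet_adj]
  simp [eq_comm]

lemma Hgraph_le (f : Fin k → Fin m) : Hgraph S f ≤ S.G := by
  have h : (Set.range fun j => S.edge (f j)) ⊆ S.G.edgeSet := by
    rintro e ⟨j, rfl⟩
    show S.edge (f j) ∈ S.G.edgeSet
    rw [SignedIncidence.edge, show Sym2.mk.uncurry (S.ends (f j))
      = s((S.ends (f j)).1, (S.ends (f j)).2) from rfl, SimpleGraph.mem_edgeSet]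
    exact (S.ends_adj (f j))
  calc Hgraph S f ≤ SimpleGraph.fromEdgeSet S.G.edgeSet := SimpleGraph.fromEdgeSet_mono h
  _ = S.G := SimpleGraph.fromEdgeSet_edgeSet S.G

/-- A function which agrees across every selected edge is constant along walks of `Hgraph`. -/
lemma walk_const {f : Fin k → Fin m} {x : Fin (k + 1) → ℝ}
    (hx : ∀ j, x (S.ends (f j)).1 = x (S.ends (f j)).2) {u v : Fin (k + 1)}
    (w : (Hgraph S f).Walk u v) : x u = x v := by
  induction w with
  | nil => rfl
  | cons h w ih =>
    refine Eq.trans ?_ ih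
    obtain ⟨⟨j, hj⟩, -⟩ := Hgraph_adj.mp h
    rw [SignedIncidence.edge, show Sym2.mk.uncurry (S.ends (f j))
      = s((S.ends (f j)).1, (S.ends (f j)).2) from rfl] at hj
    rcases Sym2.eq_iff.mp hj with ⟨h1, h2⟩ | ⟨h1, h2⟩
    · rw [← h1, ← h2]; exact hx j
    · rw [← h1, ← h2]; exact (hx j).symm

end SignedIncidence

namespace SignedIncidence

open SimpleGraph

variable {k m : ℕ} {S : SignedIncidence (k + 1) m} {M : Matrix (Fin (k + 1)) (Fin m) ℝ}

open scoped Classical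

/-- If the graph of `f` is connected, the reduced incidence matrix is nonsingular. -/
lemma det_ne_zero_of_connected (hM : S.Std M) (i : Fin (k + 1)) (f : Fin k → Fin m)
    (hconn : (Hgraph S f).Connected) :
    (M.submatrix i.succAbove f).det ≠ 0 := by
  intro hdet
  obtain ⟨y, hy0, hy⟩ := Matrix.exists_vecMul_eq_zero_iff.mpr hdet
  set x : Fin (k + 1) → ℝ := fun v => ∑ p, if i.succAbove p = v then y p else 0 with hxdef
  have hxi : x i = 0 := by
    rw [hxdef]
    refine Finset.sum_eq_zero fun p _ => ?_
    rw [if_neg (Fin.succAbove_ne i p)]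
  have hxs : ∀ p, x (i.succAbove p) = y p := by
    intro p
    simp only [hxdef]
    rw [Finset.sum_eq_single p]
    · rw [if_pos rfl]
    · intro q _ hq
      rw [if_neg fun hc => hq (Fin.succAbove_right_injective hc)]
    · intro h; exact absurd (Finset.mem_univ p) h
  have hedge : ∀ j, x (S.ends (f j)).1 = x (S.ends (f j)).2 := by
    intro j
    have hcol : ∑ p, y p * M (i.succAbove p) (f j) = 0 := by
      have := congrFun hy j
      simpa [Matrix.vecMul, dotProduct, Matrix.submatrix] using this
    have hall : ∑ v, x v * M v (f j) = 0 := by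
      rw [Fin.sum_univ_succAbove (fun v => x v * M v (f j)) i, hxi]
      simp only [zero_mul, zero_add]
      rw [← hcol]
      exact Finset.sum_congr rfl fun p _ => by rw [hxs]
    have hform := hM.sum_mul (f j) x
    rw [hall] at hform
    obtain ⟨h1, h2, -⟩ := hM (f j)
    have hMb : M (S.ends (f j)).2 (f j) = - M (S.ends (f j)).1 (f j) := by linarith
    rw [hMb] at hform
    rcases h1 with h | h <;> rw [h] at hform <;> linarith
  have hzero : ∀ v, x v = 0 := by
    intro v
    have hw : (Hgraph S f).Walk v i := Classical.choice (hconn.preconnected v i)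
    rw [walk_const hedge hw, hxi]
  apply hy0
  funext p
  rw [← hxs p, hzero]
  rfl

/-- If the reduced incidence matrix is nonsingular, the graph of `f` is connected. -/
lemma connected_of_det_ne_zero (hM : S.Std M) (i : Fin (k + 1)) (f : Fin k → Fin m)
    (hdet : (M.submatrix i.succAbove f).det ≠ 0) :
    (Hgraph S f).Connected := by
  have hreach : ∀ v, (Hgraph S f).Reachable i v := by
    intro v0
    by_contra hnr
    set x : Fin (k + 1) → ℝ := fun v => if (Hgraph S f).Reachable v0 v then 1 else 0 with hxdef
    have hxi : x i = 0 := by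
      rw [hxdef]
      simp only
      rw [if_neg fun h => hnr h.symm]
    have hxv0 : x v0 = 1 := by
      rw [hxdef]
      simp only
      rw [if_pos (Reachable.refl v0)]
    have hedge : ∀ j, x (S.ends (f j)).1 = x (S.ends (f j)).2 := by
      intro j
      have hadj : (Hgraph S f).Adj (S.ends (f j)).1 (S.ends (f j)).2 :=
        Hgraph_adj.mpr ⟨⟨j, by rw [SignedIncidence.edge]; rfl⟩, ends_ne (f j)⟩
      rw [hxdef]
      simp only
      by_cases hr : (Hgraph S f).Reachable v0 (S.ends (f j)).1
      · rw [if_pos hr, if_pos (hr.trans hadj.reachable)]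
      · rw [if_neg hr, if_neg fun h => hr (h.trans hadj.symm.reachable)]
    have hvne : v0 ≠ i := fun h => by rw [h] at hxv0; rw [hxi] at hxv0; norm_num at hxv0
    obtain ⟨p0, hp0⟩ := Fin.exists_succAbove_eq (Ne.symm (Ne.symm hvne))
    apply hdet
    rw [← Matrix.exists_vecMul_eq_zero_iff]
    refine ⟨fun p => x (i.succAbove p), ?_, ?_⟩
    · intro h
      have := congrFun h p0
      rw [hp0] at this
      rw [hxv0] at this
      norm_num at this
    · funext j
      have : ∑ p, x (i.succAbove p) * M (i.succAbove p) (f j) = 0 := by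
        have hall : ∑ v, x v * M v (f j) = 0 := hM.sum_mul_eq_zero (f j) (hedge j)
        rw [Fin.sum_univ_succAbove (fun v => x v * M v (f j)) i, hxi] at hall
        simpa using hall
      simpa [Matrix.vecMul, dotProduct, Matrix.submatrix] using this
  exact Connected.mk (fun u v => (hreach u).symm.trans (hreach v))

/-- Telescoping coefficients along a walk. -/
lemma walk_coeffs (hM : S.Std M) {f : Fin k → Fin m} (hf : Function.Injective f)
    {u v : Fin (k + 1)} (w : (Hgraph S f).Walk u v) :
    ∃ y : Fin k → ℝ,
      (∀ j, y j ≠ 0 → S.edge (f j) ∈ w.edges) ∧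
      (∀ p, ∑ j, y j * M p (f j) = (if p = u then 1 else 0) - (if p = v then 1 else 0)) ∧
      (w.edges.Nodup → ∀ j, S.edge (f j) ∈ w.edges → (y j = 1 ∨ y j = -1)) := by
  induction w with
  | nil =>
    refine ⟨0, by simp, fun p => by simp, by simp⟩
  | @cons u u' v h w ih =>
    obtain ⟨y, hy1, hy2, hy3⟩ := ih
    obtain ⟨⟨j0, hj0⟩, hne⟩ := Hgraph_adj.mp h
    refine ⟨fun j => y j + if j = j0 then M u (f j0) else 0, ?_, ?_, ?_⟩
    · intro j hj
      have hj' : y j + (if j = j0 then M u (f j0) else 0) ≠ 0 := hj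
      rw [Walk.edges_cons, List.mem_cons]
      by_cases hjj : j = j0
      · subst hjj; exact Or.inl hj0
      · rw [if_neg hjj, add_zero] at hj'
        exact Or.inr (hy1 j hj')
    · intro p
      have hsplit : ∑ j, (y j + if j = j0 then M u (f j0) else 0) * M p (f j)
          = (∑ j, y j * M p (f j)) + ∑ j, (if j = j0 then M u (f j0) * M p (f j) else 0) := by
        rw [← Finset.sum_add_distrib]
        refine Finset.sum_congr rfl fun j _ => by
          by_cases hjj : j = j0 <;> simp [hjj] <;> ring
      rw [hsplit, hy2 p, Finset.sum_ite_eq' Finset.univ j0 (fun j => M u (f j0) * M p (f j)),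
        if_pos (Finset.mem_univ j0), hM.col_formula (f j0) hj0 p]
      ring
    · intro hnd j hj
      rw [Walk.edges_cons, List.nodup_cons] at hnd
      obtain ⟨hhead, htail⟩ := hnd
      show y j + (if j = j0 then M u (f j0) else 0) = 1 ∨
        y j + (if j = j0 then M u (f j0) else 0) = -1
      by_cases hjj : j = j0
      · have hj0' : S.edge (f j) = s(u, u') := by rw [hjj]; exact hj0
        have hyj : y j = 0 := by
          by_contra hc
          exact hhead (hj0' ▸ hy1 j hc)
        rw [hyj, zero_add, if_pos hjj]
        have hcf := hM.col_formula (f j0) hj0 u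
        rw [if_pos rfl, if_neg hne] at hcf
        exact mul_self_eq_one_iff.mp (by linarith)
      · rw [if_neg hjj, add_zero]
        rw [Walk.edges_cons, List.mem_cons] at hj
        rcases hj with hj | hj
        · exact absurd (hf (S.ends_inj (hj.trans hj0.symm))) hjj
        · exact hy3 htail j hj

/-- A cycle makes the reduced incidence matrix singular. -/
lemma det_zero_of_cycle (hM : S.Std M) (i : Fin (k + 1)) {f : Fin k → Fin m}
    (hf : Function.Injective f) {v : Fin (k + 1)} (c : (Hgraph S f).Walk v v)
    (hc : c.IsCycle) :
    (M.submatrix i.succAbove f).det = 0 := by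
  obtain ⟨y, hy1, hy2, hy3⟩ := walk_coeffs hM hf c
  have hzero : ∀ p, ∑ j, y j * M p (f j) = 0 := by
    intro p
    rw [hy2 p]; ring
  have hlen : c.edges ≠ [] := by
    intro hnil
    have h3 := hc.three_le_length
    have : c.edges.length = c.length := c.length_edges
    rw [hnil] at this
    simp at this
    omega
  obtain ⟨e, he⟩ := List.exists_mem_of_ne_nil c.edges hlen
  have heset : e ∈ (Hgraph S f).edgeSet := c.edges_subset_edgeSet he
  rw [Hgraph_edgeSet] at heset
  obtain ⟨j, hj⟩ := heset
  have hj' : S.edge (f j) = e := hj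
  have hyj : y j = 1 ∨ y j = -1 :=
    hy3 hc.isCircuit.isTrail.edges_nodup j (by rw [hj']; exact he)
  rw [← Matrix.exists_mulVec_eq_zero_iff]
  refine ⟨y, ?_, ?_⟩
  · intro h
    have := congrFun h j
    rcases hyj with hy | hy <;> rw [hy] at this <;> norm_num at this
  · funext p
    have := hzero (i.succAbove p)
    simpa [Matrix.mulVec, dotProduct, Matrix.submatrix, mul_comm] using this

end SignedIncidence

namespace SignedIncidence

open SimpleGraph

variable {k m : ℕ} {S : SignedIncidence (k + 1) m} {M : Matrix (Fin (k + 1)) (Fin m) ℝ}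

open scoped Classical

/-- The square of a reduced-incidence minor is the indicator that the chosen edges
form a spanning tree. -/
lemma det_sq (hM : S.Std M) (i : Fin (k + 1)) {f : Fin k → Fin m}
    (hf : Function.Injective f) :
    (M.submatrix i.succAbove f).det ^ 2 = if (Hgraph S f).IsTree then 1 else 0 := by
  by_cases ht : (Hgraph S f).IsTree
  · rw [if_pos ht]
    have hne := det_ne_zero_of_connected hM i f ht.isConnected
    rcases colProp_det k (M.submatrix i.succAbove f)
        (hM.colProp.submatrix Fin.succAbove_right_injective f) with h | h | h
    · exact absurd h hne
    · rw [h]; norm_num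
    · rw [h]; norm_num
  · rw [if_neg ht]
    rw [SimpleGraph.isTree_iff] at ht
    by_cases hcn : (Hgraph S f).Connected
    · have hnac : ¬ (Hgraph S f).IsAcyclic := fun h => ht ⟨hcn, h⟩
      rw [SimpleGraph.IsAcyclic] at hnac
      push_neg at hnac
      obtain ⟨v, c, hc⟩ := hnac
      rw [det_zero_of_cycle hM i hf c hc]
      norm_num
    · have hd : (M.submatrix i.succAbove f).det = 0 := by
        by_contra hc
        exact hcn (connected_of_det_ne_zero hM i f hc)
      rw [hd]; norm_num

/-- Strictly monotone edge selections whose graph is a tree are in bijection with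
spanning trees contained in `G`. -/
lemma count_trees (S : SignedIncidence (k + 1) m) :
    (Finset.univ.filter fun f : Fin k → Fin m =>
        StrictMono f ∧ (Hgraph S f).IsTree).card
      = Nat.card {H : SimpleGraph (Fin (k + 1)) // H ≤ S.G ∧ H.IsTree} := by
  rw [← Fintype.card_subtype, Fintype.card_eq_nat_card]
  apply Nat.card_eq_of_bijective
    (fun fp : {f : Fin k → Fin m // StrictMono f ∧ (Hgraph S f).IsTree} =>
      (⟨Hgraph S fp.1, Hgraph_le fp.1, fp.2.2⟩ :
        {H : SimpleGraph (Fin (k + 1)) // H ≤ S.G ∧ H.IsTree}))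
  constructor
  · rintro ⟨f, hf, hft⟩ ⟨g, hg, hgt⟩ hfg
    simp only [Subtype.mk_eq_mk] at hfg
    have hes : (Set.range fun j => S.edge (f j)) = Set.range fun j => S.edge (g j) := by
      rw [← Hgraph_edgeSet (S := S) f, ← Hgraph_edgeSet (S := S) g, hfg]
    have hrange : Set.range f = Set.range g := by
      apply Set.image_injective.mpr S.ends_inj
      rw [← Set.range_comp, ← Set.range_comp]
      exact hes
    haveI : WellFoundedLT (Fin k) := inferInstance
    have hfg2 : f = g := (StrictMono.range_inj (β := Fin k) (γ := Fin m) hf hg).mp hrange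
    exact Subtype.ext hfg2
  · rintro ⟨H, hle, htree⟩
    -- the set of labels of edges of `H`
    set L : Finset (Fin m) := Finset.univ.filter fun ℓ => S.edge ℓ ∈ H.edgeSet with hLdef
    have hcard : L.card = k := by
      have hbij : L.card = H.edgeFinset.card := by
        apply Finset.card_bij (fun ℓ _ => S.edge ℓ)
        · intro ℓ hℓ
          rw [SimpleGraph.mem_edgeFinset]
          exact (Finset.mem_filter.mp hℓ).2
        · intro ℓ1 _ ℓ2 _ h
          exact S.ends_inj h
        · intro e he
          rw [SimpleGraph.mem_edgeFinset] at he
          obtain ⟨ℓ, hℓ⟩ := S.ends_surj e (SimpleGraph.edgeSet_mono hle he)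
          refine ⟨ℓ, ?_, hℓ⟩
          rw [hLdef, Finset.mem_filter]
          exact ⟨Finset.mem_univ ℓ, by rw [show S.edge ℓ = e from hℓ]; exact he⟩
      have := htree.card_edgeFinset
      rw [Fintype.card_fin] at this
      omega
    set f : Fin k → Fin m := fun j => L.orderEmbOfFin hcard j with hfdef
    have hfSM : StrictMono f := (L.orderEmbOfFin hcard).strictMono
    have hHf : Hgraph S f = H := by
      have hrange : (Set.range fun j => S.edge (f j)) = H.edgeSet := by
        have h1 : (Set.range fun j => S.edge (f j)) = S.edge '' (Set.range f) := by
          rw [← Set.range_comp]; rfl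
        rw [h1, hfdef]
        have h2 : Set.range (fun j => L.orderEmbOfFin hcard j) = (L : Set (Fin m)) :=
          Finset.range_orderEmbOfFin L hcard
        rw [h2]
        ext e
        constructor
        · rintro ⟨ℓ, hℓ, rfl⟩
          have := (Finset.mem_filter.mp hℓ).2
          exact this
        · intro he
          obtain ⟨ℓ, hℓ⟩ := S.ends_surj e (SimpleGraph.edgeSet_mono hle he)
          refine ⟨ℓ, ?_, hℓ⟩
          rw [hLdef]
          simp only [Finset.coe_filter, Set.mem_setOf_eq]
          exact ⟨Finset.mem_univ ℓ, by rw [show S.edge ℓ = e from hℓ]; exact he⟩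
      rw [Hgraph, hrange, SimpleGraph.fromEdgeSet_edgeSet]
    exact ⟨⟨f, hfSM, by rw [hHf]; exact htree⟩, Subtype.ext hHf⟩

end SignedIncidence

open SignedIncidence
open scoped Classical in
theorem balanced_det_L_and_vol {k m : ℕ} (S : SignedIncidence (k + 1) m)
    (hconn : S.G.Connected) (hbal : S.Balanced)
    (N : Matrix (Fin (k + 1)) (Fin m) ℝ) (hN : S.IsIncidence N) :
    (N * Nᵀ).det = 0 ∧
    (∑ i : Fin (k + 1), ∑ f ∈ Finset.univ.filter (fun f : Fin k → Fin m => StrictMono f),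
        ((N.submatrix i.succAbove f).det) ^ 2)
      = ((k + 1 : ℕ) : ℝ) *
        ((Nat.card {H : SimpleGraph (Fin (k + 1)) // H ≤ S.G ∧ H.IsTree} : ℕ) : ℝ) := by
  obtain ⟨θ, hθpm, hθ⟩ := S.exists_switch hconn hbal
  set M : Matrix (Fin (k + 1)) (Fin m) ℝ := Matrix.of fun v ℓ => (θ v : ℝ) * N v ℓ with hMdef
  have hθR : ∀ v, (θ v : ℝ) = 1 ∨ (θ v : ℝ) = -1 := by
    intro v
    rcases hθpm v with h | h <;> rw [h] <;> [left; right] <;> norm_num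
  have hStd : S.Std M := by
    intro ℓ
    obtain ⟨h1, h2, h3, h4⟩ := hN ℓ
    have hadj := S.ends_adj ℓ
    have hσ : S.sigma (S.ends ℓ).1 (S.ends ℓ).2
        = θ (S.ends ℓ).1 * θ (S.ends ℓ).2 := hθ _ _ hadj
    have hMa : M (S.ends ℓ).1 ℓ = (θ (S.ends ℓ).1 : ℝ) * N (S.ends ℓ).1 ℓ := rfl
    have hMb : M (S.ends ℓ).2 ℓ = (θ (S.ends ℓ).2 : ℝ) * N (S.ends ℓ).2 ℓ := rfl
    have hprod : M (S.ends ℓ).1 ℓ * M (S.ends ℓ).2 ℓ = -1 := by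
      rw [hMa, hMb]
      have hre : (θ (S.ends ℓ).1 : ℝ) * N (S.ends ℓ).1 ℓ *
            ((θ (S.ends ℓ).2 : ℝ) * N (S.ends ℓ).2 ℓ)
          = ((θ (S.ends ℓ).1 * θ (S.ends ℓ).2 : ℤ) : ℝ)
            * (N (S.ends ℓ).1 ℓ * N (S.ends ℓ).2 ℓ) := by
        push_cast; ring
      rw [hre, ← hσ, h1]
      rcases S.sigma_sign _ _ hadj with h | h <;> rw [h] <;> norm_num
    have hpm_a : M (S.ends ℓ).1 ℓ = 1 ∨ M (S.ends ℓ).1 ℓ = -1 := by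
      rw [hMa]
      rcases hθR (S.ends ℓ).1 with h | h <;> rcases h2 with h' | h' <;>
        rw [h, h'] <;> [left; right; right; left] <;> norm_num
    have hpm_b : M (S.ends ℓ).2 ℓ = 1 ∨ M (S.ends ℓ).2 ℓ = -1 := by
      rw [hMb]
      rcases hθR (S.ends ℓ).2 with h | h <;> rcases h3 with h' | h' <;>
        rw [h, h'] <;> [left; right; right; left] <;> norm_num
    refine ⟨hpm_a, ?_, ?_⟩
    · rcases hpm_a with h | h <;> rcases hpm_b with h' | h' <;>
        rw [h, h'] at hprod ⊢ <;> linarith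
    · intro v hv1 hv2
      show (θ v : ℝ) * N v ℓ = 0
      rw [h4 v hv1 hv2, mul_zero]
  constructor
  · rw [← Matrix.exists_mulVec_eq_zero_iff]
    refine ⟨fun v => (θ v : ℝ), ?_, ?_⟩
    · intro h
      have h0 := congrFun h 0
      simp only [Pi.zero_apply] at h0
      rcases hθR 0 with h' | h' <;> rw [h'] at h0 <;> norm_num at h0
    · rw [← Matrix.mulVec_mulVec]
      have hNv : Nᵀ.mulVec (fun v => (θ v : ℝ)) = 0 := by
        funext ℓ
        have hsum : ∑ v, (fun _ => (1 : ℝ)) v * M v ℓ = 0 :=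
          hStd.sum_mul_eq_zero ℓ rfl
        simp only [one_mul] at hsum
        have hM' : ∀ v, M v ℓ = (θ v : ℝ) * N v ℓ := fun v => rfl
        simp only [hM'] at hsum
        simp only [Matrix.mulVec, dotProduct, Matrix.transpose_apply, Pi.zero_apply]
        rw [← hsum]
        exact Finset.sum_congr rfl fun v _ => mul_comm _ _
      rw [hNv, Matrix.mulVec_zero]
  · have hsub : ∀ (i : Fin (k + 1)) (f : Fin k → Fin m),
        (N.submatrix i.succAbove f).det ^ 2 = (M.submatrix i.succAbove f).det ^ 2 := by
      intro i f
      have hMsub : M.submatrix i.succAbove f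
          = Matrix.of fun p q =>
              (θ (i.succAbove p) : ℝ) * (N.submatrix i.succAbove f) p q := rfl
      rw [hMsub, Matrix.det_mul_column, mul_pow]
      have hone : (∏ p : Fin k, (θ (i.succAbove p) : ℝ)) ^ 2 = 1 := by
        rw [← Finset.prod_pow]
        refine Finset.prod_eq_one fun p _ => ?_
        rcases hθR (i.succAbove p) with h | h <;> rw [h] <;> norm_num
      rw [hone, one_mul]
    have hinner : ∀ i : Fin (k + 1),
        ∑ f ∈ Finset.univ.filter (fun f : Fin k → Fin m => StrictMono f),
          ((N.submatrix i.succAbove f).det) ^ 2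
        = ((Nat.card {H : SimpleGraph (Fin (k + 1)) // H ≤ S.G ∧ H.IsTree} : ℕ) : ℝ) := by
      intro i
      have step1 : ∑ f ∈ Finset.univ.filter (fun f : Fin k → Fin m => StrictMono f),
          ((N.submatrix i.succAbove f).det) ^ 2
          = ∑ f ∈ Finset.univ.filter (fun f : Fin k → Fin m => StrictMono f),
            (if (Hgraph S f).IsTree then (1 : ℝ) else 0) := by
        refine Finset.sum_congr rfl fun f hf => ?_
        rw [hsub i f, det_sq hStd i ((Finset.mem_filter.mp hf).2).injective]
      rw [step1, Finset.sum_boole, Finset.filter_filter]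
      rw [count_trees S]
    calc ∑ i : Fin (k + 1), ∑ f ∈ Finset.univ.filter (fun f : Fin k → Fin m => StrictMono f),
          ((N.submatrix i.succAbove f).det) ^ 2
        = ∑ _i : Fin (k + 1),
            ((Nat.card {H : SimpleGraph (Fin (k + 1)) // H ≤ S.G ∧ H.IsTree} : ℕ) : ℝ) :=
          Finset.sum_congr rfl fun i _ => hinner i
      _ = ((k + 1 : ℕ) : ℝ) *
            ((Nat.card {H : SimpleGraph (Fin (k + 1)) // H ≤ S.G ∧ H.IsTree} : ℕ) : ℝ) := by
          rw [Finset.sum_const, Finset.card_univ, Fintype.card_fin, nsmul_eq_mul]
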